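/- Suppose A ∈ ℝ^{n×n} has all eigenvalues with negative real part. Then for any symmetric positive semidefinite Q, the Lyapunov equation AᵀP + PA + Q = 0 has a unique solution P, and P = ∫₀^∞ exp(Aᵀt)·Q·exp(At) dt; moreover P is symmetric positive semidefinite, and if Q is positive definite then so is P. -/

import Mathlib

open Matrix NormedSpace Filter MeasureTheory
open scoped Topology
open scoped ENNReal NNReal

namespace LyapunovAux

attribute [local instance] Matrix.linftyOpNormedRing Matrix.linftyOpNormedAlgebra

variable {n : ℕ}

/-- exp applied to an eigenvector. -/
lemma exp_mulVec_eigenvector {M : Matrix (Fin n) (Fin n) ℂ} {lam : ℂ} {v : Fin n → ℂ}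
    (hv : M.mulVec v = lam • v) : (exp M).mulVec v = Complex.exp lam • v := by
  have hpow : ∀ k : ℕ, (M ^ k).mulVec v = lam ^ k • v := by
    intro k
    induction k with
    | zero => simp
    | succ k ih =>
      rw [pow_succ', pow_succ', ← Matrix.mulVec_mulVec, ih, Matrix.mulVec_smul, hv,
        smul_smul, mul_comm]
  let L0 : Matrix (Fin n) (Fin n) ℂ →ₗ[ℂ] (Fin n → ℂ) :=
    { toFun := fun B => B.mulVec v
      map_add' := fun B C => Matrix.add_mulVec B C v
      map_smul' := fun c B => Matrix.smul_mulVec c B v }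
  let L : Matrix (Fin n) (Fin n) ℂ →L[ℂ] (Fin n → ℂ) := ⟨L0, L0.continuous_of_finiteDimensional⟩
  have hLdef : ∀ B : Matrix (Fin n) (Fin n) ℂ, L B = B.mulVec v := fun _ => rfl
  have h1 : (exp M).mulVec v = ∑' k : ℕ, ((k.factorial : ℂ)⁻¹ • M ^ k).mulVec v := by
    rw [← hLdef, exp_eq_tsum ℂ, L.map_tsum (expSeries_summable' M)]
    rfl
  rw [h1]
  have h2 : ∀ k : ℕ, ((k.factorial : ℂ)⁻¹ • M ^ k).mulVec v
      = ((k.factorial : ℂ)⁻¹ * lam ^ k) • v := by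
    intro k
    rw [Matrix.smul_mulVec, hpow, smul_smul]
  simp_rw [h2]
  rw [Summable.tsum_smul_const]
  · congr 1
    rw [Complex.exp_eq_exp_ℂ, exp_eq_tsum ℂ]
    simp_rw [smul_eq_mul]
  · simpa [smul_eq_mul] using expSeries_summable' (𝕂 := ℂ) lam

open Module End in
lemma spectral_mapping {n : ℕ} (M : Matrix (Fin n) (Fin n) ℂ) {μ : ℂ}
    (hμ : μ ∈ spectrum ℂ (exp M)) :
    ∃ lam ∈ spectrum ℂ M, μ = Complex.exp lam := by
  set f : Module.End ℂ (Fin n → ℂ) := Matrix.toLin' M with hf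
  set B : Module.End ℂ (Fin n → ℂ) := Matrix.toLin' (exp M) with hB
  have hμB : μ ∈ spectrum ℂ B := by
    rwa [hB, show (Matrix.toLin' (exp M)) = Matrix.toLinAlgEquiv' (exp M) from rfl,
      AlgEquiv.spectrum_eq]
  have hev : Module.End.HasEigenvalue B μ :=
    Module.End.HasEigenvalue.of_mem_spectrum hμB
  -- the eigenspace is invariant under f since f commutes with B
  have hcomm : Commute B f := by
    rw [hf, hB]
    have h : Commute (exp M) M := Commute.exp_left (Commute.refl M)
    exact h.map (Matrix.toLinAlgEquiv' (R := ℂ) (n := Fin n))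
  have hMapsTo : Set.MapsTo f (B.eigenspace μ) (B.eigenspace μ) := by
    have := Module.End.mapsTo_genEigenspace_of_comm hcomm μ 1
    simpa [Module.End.eigenspace_def] using this
  haveI : Nontrivial (B.eigenspace μ) := by
    refine Submodule.nontrivial_iff_ne_bot.mpr ?_
    exact hev
  obtain ⟨lam, hlam⟩ := Module.End.exists_eigenvalue (f.restrict hMapsTo)
  obtain ⟨w, hw⟩ := hlam.exists_hasEigenvector
  have hwv : f w.val = lam • w.val := by
    have := hw.apply_eq_smul
    exact congrArg Subtype.val this
  have hvne : (w : Fin n → ℂ) ≠ 0 := fun h => hw.right (Subtype.ext h)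
  -- lam is in the spectrum of M
  have hlamM : lam ∈ spectrum ℂ M := by
    rw [← AlgEquiv.spectrum_eq (Matrix.toLinAlgEquiv' (R := ℂ) (n := Fin n)) M,
      ← Module.End.hasEigenvalue_iff_mem_spectrum]
    refine Module.End.hasEigenvalue_of_hasEigenvector ⟨?_, hvne⟩
    show _ ∈ Module.End.eigenspace _ lam
    exact Module.End.mem_eigenspace_iff.mpr hwv
  refine ⟨lam, hlamM, ?_⟩
  -- now compute
  have hMv : M.mulVec w.val = lam • w.val := by
    simpa [hf, Matrix.toLin'_apply] using hwv
  have h1 : (exp M).mulVec w.val = Complex.exp lam • w.val := exp_mulVec_eigenvector hMv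
  have h2 : (exp M).mulVec w.val = μ • w.val := by
    have hmem := w.property
    rw [Module.End.mem_eigenspace_iff] at hmem
    simpa [hB, Matrix.toLin'_apply] using hmem
  have := h1.symm.trans h2
  obtain ⟨i, hi⟩ := Function.ne_iff.mp hvne
  have := congrFun this i
  simp only [Pi.smul_apply, smul_eq_mul] at this
  exact (mul_right_cancel₀ hi this).symm



lemma entry_norm_le (N : Matrix (Fin n) (Fin n) ℂ) (i j : Fin n) : ‖N i j‖ ≤ ‖N‖ := by
  have h1 : ‖N i j‖₊ ≤ ∑ l, ‖N i l‖₊ :=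
    Finset.single_le_sum (f := fun l => ‖N i l‖₊) (fun _ _ => zero_le) (Finset.mem_univ j)
  have h2 : (∑ l, ‖N i l‖₊) ≤ ‖N‖₊ := by
    rw [Matrix.linfty_opNNNorm_def]
    exact Finset.le_sup (f := fun i => ∑ l, ‖N i l‖₊) (Finset.mem_univ i)
  exact_mod_cast h1.trans h2

lemma map_exp_smul (A : Matrix (Fin n) (Fin n) ℝ) (t : ℝ) :
    (exp (t • A)).map (Complex.ofReal : ℝ → ℂ)
      = exp (t • A.map (Complex.ofReal : ℝ → ℂ)) := by
  have hcont : Continuous fun M : Matrix (Fin n) (Fin n) ℝ =>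
      (Complex.ofRealAm.mapMatrix (m := Fin n)) M := by
    simp only [AlgHom.mapMatrix_apply]
    exact continuous_pi fun i => continuous_pi fun j =>
      Complex.continuous_ofReal.comp ((continuous_apply j).comp (continuous_apply i))
  have h := map_exp (Complex.ofRealAm.mapMatrix (m := Fin n)) hcont (t • A)
  have h2 : (Complex.ofRealAm.mapMatrix (m := Fin n)) (t • A)
      = t • A.map (Complex.ofReal : ℝ → ℂ) := by
    ext i j
    simp [Complex.real_smul]
  rw [h2] at h
  rw [show (exp (t • A)).map (Complex.ofReal : ℝ → ℂ)
      = (Complex.ofRealAm.mapMatrix (m := Fin n)) (exp (t • A)) from rfl]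
  exact h




-- complex matrix exponential decay
lemma complex_decay {n : ℕ} [Nonempty (Fin n)] (Ac : Matrix (Fin n) (Fin n) ℂ)
    (hA : ∀ μ ∈ spectrum ℂ Ac, μ.re < 0) :
    ∃ C > (0:ℝ), ∃ ε > (0:ℝ), ∀ t : ℝ, 0 ≤ t → ‖exp (t • Ac)‖ ≤ C * Real.exp (-ε * t) := by
  classical
  set B := exp Ac with hBdef
  -- spectral radius of B is < 1
  have hρ : spectralRadius ℂ B < 1 := by
    obtain ⟨z, hz, hzr⟩ := spectrum.exists_nnnorm_eq_spectralRadius (a := B)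
    obtain ⟨lam, hlam, rfl⟩ := spectral_mapping Ac hz
    rw [← hzr]
    have : ‖Complex.exp lam‖ < 1 := by
      rw [Complex.norm_exp]
      exact Real.exp_lt_one_iff.mpr (hA lam hlam)
    exact_mod_cast ENNReal.coe_lt_one_iff.mpr (by exact_mod_cast this)
  -- get k with ‖B^k‖ < 1
  obtain ⟨k, hk1, hkθ⟩ : ∃ k : ℕ, 1 ≤ k ∧ ‖B ^ k‖ < 1 := by
    have htend := spectrum.pow_nnnorm_pow_one_div_tendsto_nhds_spectralRadius B
    have hev := htend.eventually_lt_const hρ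
    obtain ⟨k, hk, hk1⟩ := (hev.and (Filter.eventually_ge_atTop 1)).exists
    refine ⟨k, hk1, ?_⟩
    by_contra hcon
    push_neg at hcon
    have h1 : (1 : ℝ≥0∞) ≤ (‖B ^ k‖₊ : ℝ≥0∞) := by
      exact_mod_cast (by exact_mod_cast hcon : (1:ℝ≥0) ≤ ‖B ^ k‖₊)
    have h2 : (1 : ℝ≥0∞) ≤ (‖B ^ k‖₊ : ℝ≥0∞) ^ (1 / (k:ℝ)) := by
      calc (1 : ℝ≥0∞) = 1 ^ (1 / (k:ℝ)) := (ENNReal.one_rpow _).symm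
        _ ≤ _ := ENNReal.rpow_le_rpow h1 (by positivity)
    exact absurd (h2.trans_lt hk) (by simp)
  -- constants
  set θ := ‖B ^ k‖ with hθdef
  have hBunit : IsUnit B := _root_.Matrix.isUnit_exp Ac
  have hθpos : 0 < θ := by
    have hne : B ^ k ≠ 0 := (hBunit.pow k).ne_zero
    simpa [hθdef] using norm_pos_iff.mpr hne
  have hlog : Real.log θ < 0 := Real.log_neg hθpos hkθ
  have hkR : (0:ℝ) < k := by exact_mod_cast hk1
  set ε := -Real.log θ / k with hεdef
  have hε : 0 < ε := div_pos (neg_pos.mpr hlog) hkR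
  have hεk : ε * k = -Real.log θ := by
    rw [hεdef]; field_simp
  have hexpRC : ∀ s : ℝ, exp (s • Ac) = exp (s • Ac) :=
    fun s => rfl
  have hcont : Continuous fun s : ℝ => exp (s • Ac) := by
    exact continuous_iff_continuousAt.mpr fun t =>
      (hasDerivAt_exp_smul_const (𝕂 := ℝ) Ac t).continuousAt
  obtain ⟨M, hM⟩ := (isCompact_Icc (a := (0:ℝ)) (b := (k:ℝ))).exists_bound_of_continuousOn
    hcont.continuousOn
  refine ⟨max M 1 / θ, by positivity, ε, hε, fun t ht => ?_⟩
  set m := ⌊t / k⌋₊ with hmdef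
  have hm1 : (m : ℝ) * k ≤ t := by
    have := Nat.floor_le (div_nonneg ht hkR.le)
    calc (m:ℝ) * k ≤ (t / k) * k := by
          exact mul_le_mul_of_nonneg_right this hkR.le
      _ = t := by field_simp
  have hm2 : t < ((m : ℝ) + 1) * k := by
    have := Nat.lt_floor_add_one (t / k)
    calc t = (t / k) * k := by field_simp
      _ < ((m:ℝ) + 1) * k := by exact mul_lt_mul_of_pos_right this hkR
  set s := t - (m : ℝ) * k with hsdef
  have hs0 : 0 ≤ s := by simp [hsdef, hm1]
  have hsk : s ≤ k := by
    have : t ≤ (m:ℝ) * k + k := by nlinarith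
    simp only [hsdef]; linarith
  have hsplit : exp (t • Ac) = exp (s • Ac) * (B ^ k) ^ m := by
    have h1 : t • Ac = s • Ac + ((k * m : ℕ) : ℝ) • Ac := by
      rw [← add_smul]; congr 1; push_cast; rw [hsdef]; ring
    rw [h1, Matrix.exp_add_of_commute _ _ (((Commute.refl Ac).smul_left _).smul_right _)]
    congr 1
    rw [Nat.cast_smul_eq_nsmul, Matrix.exp_nsmul, hBdef, pow_mul]
  have hθm : ∀ l : ℕ, ‖exp (s • Ac) * (B ^ k) ^ l‖ ≤ max M 1 * θ ^ l := by
    intro l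
    have hMs : ‖exp (s • Ac)‖ ≤ max M 1 := (hM _ ⟨hs0, hsk⟩).trans (le_max_left _ _)
    cases l with
    | zero => simpa using hMs
    | succ l =>
      calc ‖exp (s • Ac) * (B ^ k) ^ (l+1)‖ ≤ ‖exp (s • Ac)‖ * ‖(B ^ k) ^ (l+1)‖ :=
            norm_mul_le _ _
        _ ≤ max M 1 * θ ^ (l+1) := by
            refine mul_le_mul hMs (norm_pow_le' _ l.succ_pos) (norm_nonneg _) ?_
            positivity
  have hexpb : θ ^ m ≤ Real.exp (-ε * t) / θ := by
    have h5 : θ ^ (m + 1) ≤ Real.exp (-ε * t) := by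
      have h6 : ((m:ℝ) + 1) * Real.log θ ≤ -ε * t := by
        have h7 : -ε * t ≥ -ε * (((m:ℝ) + 1) * k) := by nlinarith
        calc ((m:ℝ) + 1) * Real.log θ = -ε * (((m:ℝ)+1) * k) := by
              rw [show -ε * (((m:ℝ)+1)*k) = ((m:ℝ)+1) * (-(ε * k)) by ring, hεk]; ring
          _ ≤ -ε * t := h7
      calc θ ^ (m+1) = Real.exp (((m:ℝ)+1) * Real.log θ) := by
            rw [show ((m:ℝ)+1) = ((m+1 : ℕ) : ℝ) by push_cast; ring, Real.exp_nat_mul,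
              Real.exp_log hθpos]
        _ ≤ Real.exp (-ε * t) := Real.exp_le_exp.mpr h6
    have h8 : θ ^ m * θ ≤ Real.exp (-ε * t) := by
      calc θ ^ m * θ = θ ^ (m+1) := by ring
        _ ≤ Real.exp (-ε * t) := h5
    exact (le_div_iff₀ hθpos).mpr h8
  calc ‖exp (t • Ac)‖ = ‖exp (s • Ac) * (B ^ k) ^ m‖ := by rw [hsplit]
    _ ≤ max M 1 * θ ^ m := hθm m
    _ ≤ max M 1 * (Real.exp (-ε * t) / θ) := by
        exact mul_le_mul_of_nonneg_left hexpb (by positivity)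
    _ = max M 1 / θ * Real.exp (-ε * t) := by ring



lemma real_decay {n : ℕ} (A : Matrix (Fin n) (Fin n) ℝ)
    (hA : ∀ μ ∈ spectrum ℂ (A.map (Complex.ofReal : ℝ → ℂ)), μ.re < 0) :
    ∃ C > (0:ℝ), ∃ ε > (0:ℝ), ∀ t : ℝ, 0 ≤ t → ∀ i j : Fin n,
      |(exp (t • A)) i j| ≤ C * Real.exp (-ε * t) := by
  cases isEmpty_or_nonempty (Fin n) with
  | inl h => exact ⟨1, one_pos, 1, one_pos, fun t ht i => isEmptyElim i⟩
  | inr h =>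
    obtain ⟨C, hC, ε, hε, hbound⟩ := complex_decay (A.map (Complex.ofReal : ℝ → ℂ)) hA
    refine ⟨C, hC, ε, hε, fun t ht i j => ?_⟩
    have hentry : ((exp (t • A)) i j : ℂ)
        = (exp (t • A.map (Complex.ofReal : ℝ → ℂ))) i j := by
      rw [← map_exp_smul]; rfl
    calc |(exp (t • A)) i j| = ‖((exp (t • A)) i j : ℂ)‖ := by
          rw [Complex.norm_real, Real.norm_eq_abs]
      _ = ‖(exp (t • A.map (Complex.ofReal : ℝ → ℂ))) i j‖ := by rw [hentry]
      _ ≤ ‖exp (t • A.map (Complex.ofReal : ℝ → ℂ))‖ := entry_norm_le _ i j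
      _ ≤ C * Real.exp (-ε * t) := hbound t ht




variable {n : ℕ}

/-- The "sandwich" function `t ↦ exp(tAᵀ) X exp(tA)`. -/
noncomputable def sandw (A X : Matrix (Fin n) (Fin n) ℝ) (t : ℝ) : Matrix (Fin n) (Fin n) ℝ :=
  exp (t • Aᵀ) * X * exp (t • A)

lemma sandw_zero (A X : Matrix (Fin n) (Fin n) ℝ) : sandw A X 0 = X := by
  simp [sandw]

lemma sandw_transpose (A X : Matrix (Fin n) (Fin n) ℝ) (t : ℝ) :
    (sandw A X t)ᵀ = sandw A Xᵀ t := by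
  simp only [sandw, Matrix.transpose_mul, ← Matrix.transpose_smul, Matrix.exp_transpose,
    Matrix.transpose_transpose]
  rw [Matrix.mul_assoc]

lemma sandw_continuous (A X : Matrix (Fin n) (Fin n) ℝ) :
    Continuous fun t => sandw A X t := by
  have h1 : Continuous fun t : ℝ => exp (t • Aᵀ) :=
    continuous_iff_continuousAt.mpr fun t => (hasDerivAt_exp_smul_const (𝕂 := ℝ) Aᵀ t).continuousAt
  have h2 : Continuous fun t : ℝ => exp (t • A) :=
    continuous_iff_continuousAt.mpr fun t => (hasDerivAt_exp_smul_const (𝕂 := ℝ) A t).continuousAt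
  exact (h1.mul continuous_const).mul h2

lemma sandw_hasDerivAt (A X : Matrix (Fin n) (Fin n) ℝ) (t : ℝ) :
    HasDerivAt (fun u => sandw A X u) (Aᵀ * sandw A X t + sandw A X t * A) t := by
  have h1 : HasDerivAt (fun u : ℝ => exp (u • Aᵀ)) (Aᵀ * exp (t • Aᵀ)) t :=
    hasDerivAt_exp_smul_const' (𝕂 := ℝ) Aᵀ t
  have h2 : HasDerivAt (fun u : ℝ => exp (u • A)) (exp (t • A) * A) t :=
    hasDerivAt_exp_smul_const (𝕂 := ℝ) A t
  have h := (h1.mul_const X).mul h2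
  rw [show Aᵀ * sandw A X t + sandw A X t * A = Aᵀ * exp (t • Aᵀ) * X * exp (t • A)
      + exp (t • Aᵀ) * X * (exp (t • A) * A) by simp only [sandw]; noncomm_ring]
  exact h

/-- the continuous linear map selecting an entry of a matrix -/
noncomputable def entryCLM (i j : Fin n) : Matrix (Fin n) (Fin n) ℝ →L[ℝ] ℝ :=
  LinearMap.toContinuousLinearMap
    { toFun := fun M : Matrix (Fin n) (Fin n) ℝ => M i j
      map_add' := fun _ _ => rfl
      map_smul' := fun _ _ => rfl }

lemma sandw_entry_hasDerivAt (A X : Matrix (Fin n) (Fin n) ℝ) (t : ℝ) (i j : Fin n) :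
    HasDerivAt (fun u => sandw A X u i j) ((Aᵀ * sandw A X t + sandw A X t * A) i j) t :=
  ((entryCLM i j).hasFDerivAt.comp_hasDerivAt t (sandw_hasDerivAt A X t) : _)

lemma sandw_deriv_eq (A X : Matrix (Fin n) (Fin n) ℝ) (t : ℝ) :
    Aᵀ * sandw A X t + sandw A X t * A = sandw A (Aᵀ * X + X * A) t := by
  have hc : Commute A (exp (t • A)) :=
    Commute.exp_right ((Commute.refl A).smul_right t)
  have hcT : Commute Aᵀ (exp (t • Aᵀ)) :=
    Commute.exp_right ((Commute.refl Aᵀ).smul_right t)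
  simp only [sandw, Matrix.add_mul, Matrix.mul_add]
  have h1 : Aᵀ * exp (t • Aᵀ) * X * exp (t • A)
      = exp (t • Aᵀ) * (Aᵀ * X) * exp (t • A) := by
    rw [hcT.eq]; noncomm_ring
  have h2 : exp (t • Aᵀ) * X * exp (t • A) * A
      = exp (t • Aᵀ) * (X * A) * exp (t • A) := by
    rw [Matrix.mul_assoc (exp (t • Aᵀ) * X) (exp (t • A)) A, ← hc.eq]; noncomm_ring
  rw [← Matrix.mul_assoc Aᵀ, ← Matrix.mul_assoc Aᵀ, h1, h2]



variable {n : ℕ}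

lemma sandw_bound (A : Matrix (Fin n) (Fin n) ℝ)
    (hA : ∀ μ ∈ spectrum ℂ (A.map (Complex.ofReal : ℝ → ℂ)), μ.re < 0)
    (X : Matrix (Fin n) (Fin n) ℝ) :
    ∃ ε > (0:ℝ), ∃ K : ℝ, ∀ t : ℝ, 0 ≤ t → ∀ i j : Fin n,
      |sandw A X t i j| ≤ K * Real.exp (-ε * t) := by
  obtain ⟨C, hC, ε, hε, hb⟩ := real_decay A hA
  refine ⟨ε, hε, ∑ k : Fin n, ∑ l : Fin n, C * |X l k| * C, fun t ht i j => ?_⟩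
  have hE1 : ∀ a b : Fin n, |exp (t • Aᵀ) a b| ≤ C * Real.exp (-ε * t) := by
    intro a b
    rw [show t • Aᵀ = (t • A)ᵀ from (Matrix.transpose_smul t A).symm, Matrix.exp_transpose]
    exact hb t ht b a
  have hexp1 : Real.exp (-ε * t) ≤ 1 := Real.exp_le_one_iff.mpr (by nlinarith)
  have key : ∀ k l : Fin n, |exp (t • Aᵀ) i l * X l k * exp (t • A) k j|
      ≤ C * |X l k| * C * Real.exp (-ε * t) := by
    intro k l
    rw [abs_mul, abs_mul]
    have e1 : |exp (t • Aᵀ) i l| ≤ C := (hE1 i l).trans (by nlinarith)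
    have e2 : |exp (t • A) k j| ≤ C * Real.exp (-ε * t) := hb t ht k j
    have h1 : |exp (t • Aᵀ) i l| * |X l k| ≤ C * |X l k| :=
      mul_le_mul_of_nonneg_right e1 (abs_nonneg _)
    calc |exp (t • Aᵀ) i l| * |X l k| * |exp (t • A) k j|
        ≤ (C * |X l k|) * (C * Real.exp (-ε * t)) :=
          mul_le_mul h1 e2 (abs_nonneg _) (by positivity)
      _ = C * |X l k| * C * Real.exp (-ε * t) := by ring
  have expand : sandw A X t i j
      = ∑ k, ∑ l, exp (t • Aᵀ) i l * X l k * exp (t • A) k j := by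
    simp [sandw, Matrix.mul_apply, Finset.sum_mul]
  calc |sandw A X t i j| ≤ ∑ k, ∑ l, |exp (t • Aᵀ) i l * X l k * exp (t • A) k j| := by
        rw [expand]
        exact (Finset.abs_sum_le_sum_abs _ _).trans (Finset.sum_le_sum fun k _ =>
          Finset.abs_sum_le_sum_abs _ _)
    _ ≤ ∑ k, ∑ l, C * |X l k| * C * Real.exp (-ε * t) :=
        Finset.sum_le_sum fun k _ => Finset.sum_le_sum fun l _ => key k l
    _ = (∑ k : Fin n, ∑ l : Fin n, C * |X l k| * C) * Real.exp (-ε * t) := by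
        simp_rw [Finset.sum_mul]

lemma sandw_entry_continuous (A X : Matrix (Fin n) (Fin n) ℝ) (i j : Fin n) :
    Continuous fun t => sandw A X t i j :=
  (continuous_apply j).comp ((continuous_apply i).comp (sandw_continuous A X))

lemma sandw_integrableOn (A : Matrix (Fin n) (Fin n) ℝ)
    (hA : ∀ μ ∈ spectrum ℂ (A.map (Complex.ofReal : ℝ → ℂ)), μ.re < 0)
    (X : Matrix (Fin n) (Fin n) ℝ) (i j : Fin n) :
    IntegrableOn (fun t => sandw A X t i j) (Set.Ioi (0:ℝ)) := by
  obtain ⟨ε, hε, K, hK⟩ := sandw_bound A hA X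
  refine Integrable.mono' ((exp_neg_integrableOn_Ioi 0 hε).const_mul K)
    (sandw_entry_continuous A X i j).aestronglyMeasurable.restrict ?_
  rw [ae_restrict_iff' measurableSet_Ioi]
  exact ae_of_all _ fun t ht => hK t (le_of_lt ht) i j

lemma sandw_tendsto_entry (A : Matrix (Fin n) (Fin n) ℝ)
    (hA : ∀ μ ∈ spectrum ℂ (A.map (Complex.ofReal : ℝ → ℂ)), μ.re < 0)
    (X : Matrix (Fin n) (Fin n) ℝ) (i j : Fin n) :
    Tendsto (fun t => sandw A X t i j) atTop (𝓝 0) := by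
  obtain ⟨ε, hε, K, hK⟩ := sandw_bound A hA X
  have hg : Tendsto (fun t : ℝ => K * Real.exp (-ε * t)) atTop (𝓝 0) := by
    have h1 : Tendsto (fun t : ℝ => -ε * t) atTop atBot := by
      simp_rw [neg_mul]
      exact (tendsto_neg_atBot_iff).mpr (tendsto_id.const_mul_atTop hε)
    have h2 := Real.tendsto_exp_atBot.comp h1
    simpa using h2.const_mul K
  refine squeeze_zero_norm' ?_ hg
  filter_upwards [eventually_ge_atTop (0:ℝ)] with t ht
  simpa [Real.norm_eq_abs] using hK t ht _ _

lemma sandw_integral_deriv (A : Matrix (Fin n) (Fin n) ℝ)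
    (hA : ∀ μ ∈ spectrum ℂ (A.map (Complex.ofReal : ℝ → ℂ)), μ.re < 0)
    (X : Matrix (Fin n) (Fin n) ℝ) (i j : Fin n) :
    ∫ t in Set.Ioi (0:ℝ), sandw A (Aᵀ * X + X * A) t i j = -(X i j) := by
  have h := MeasureTheory.integral_Ioi_of_hasDerivAt_of_tendsto'
    (f := fun t => sandw A X t i j) (f' := fun t => sandw A (Aᵀ * X + X * A) t i j)
    (a := 0) (m := 0)
    (fun x _ => by
      have := sandw_entry_hasDerivAt A X x i j
      rwa [sandw_deriv_eq] at this)
    (sandw_integrableOn A hA _ i j)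
    (sandw_tendsto_entry A hA X i j)
  rw [h]; simp [sandw_zero]




lemma left_mul_integral (B : Matrix (Fin n) (Fin n) ℝ) (f : ℝ → Matrix (Fin n) (Fin n) ℝ)
    (hint : ∀ i j, IntegrableOn (fun t => f t i j) (Set.Ioi (0:ℝ)))
    (i j : Fin n) :
    (B * Matrix.of (fun i j => ∫ t in Set.Ioi (0:ℝ), f t i j)) i j
      = ∫ t in Set.Ioi (0:ℝ), (B * f t) i j := by
  simp only [Matrix.mul_apply]
  rw [MeasureTheory.integral_finset_sum _ fun k _ => (hint k j).const_mul (B i k)]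
  refine Finset.sum_congr rfl fun k _ => (MeasureTheory.integral_const_mul _ _).symm

lemma right_mul_integral (B : Matrix (Fin n) (Fin n) ℝ) (f : ℝ → Matrix (Fin n) (Fin n) ℝ)
    (hint : ∀ i j, IntegrableOn (fun t => f t i j) (Set.Ioi (0:ℝ)))
    (i j : Fin n) :
    (Matrix.of (fun i j => ∫ t in Set.Ioi (0:ℝ), f t i j) * B) i j
      = ∫ t in Set.Ioi (0:ℝ), (f t * B) i j := by
  simp only [Matrix.mul_apply]
  rw [MeasureTheory.integral_finset_sum _ fun k _ => (hint i k).mul_const (B k j)]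
  refine Finset.sum_congr rfl fun k _ => (MeasureTheory.integral_mul_const _ _).symm

lemma dot_integrable (f : ℝ → Matrix (Fin n) (Fin n) ℝ)
    (hint : ∀ i j, IntegrableOn (fun t => f t i j) (Set.Ioi (0:ℝ))) (x : Fin n → ℝ) :
    IntegrableOn (fun t => x ⬝ᵥ (f t).mulVec x) (Set.Ioi (0:ℝ)) := by
  simp only [dotProduct, Matrix.mulVec, Finset.mul_sum]
  exact MeasureTheory.integrable_finset_sum _ fun i _ =>
    MeasureTheory.integrable_finset_sum _ fun j _ =>
      (((hint i j).mul_const (x j)).const_mul (x i))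

lemma dot_integral (f : ℝ → Matrix (Fin n) (Fin n) ℝ)
    (hint : ∀ i j, IntegrableOn (fun t => f t i j) (Set.Ioi (0:ℝ))) (x : Fin n → ℝ) :
    x ⬝ᵥ (Matrix.of (fun i j => ∫ t in Set.Ioi (0:ℝ), f t i j)).mulVec x
      = ∫ t in Set.Ioi (0:ℝ), x ⬝ᵥ (f t).mulVec x := by
  simp only [dotProduct, Matrix.mulVec, Finset.mul_sum]
  rw [MeasureTheory.integral_finset_sum _ fun i _ =>
    MeasureTheory.integrable_finset_sum _ fun j _ =>
      (((hint i j).mul_const (x j)).const_mul (x i))]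
  refine Finset.sum_congr rfl fun i _ => ?_
  rw [MeasureTheory.integral_finset_sum _ fun j _ =>
      (((hint i j).mul_const (x j)).const_mul (x i))]
  refine Finset.sum_congr rfl fun j _ => ?_
  rw [MeasureTheory.integral_const_mul, MeasureTheory.integral_mul_const, Matrix.of_apply]

lemma sandw_quadratic (A X : Matrix (Fin n) (Fin n) ℝ) (t : ℝ) (x : Fin n → ℝ) :
    x ⬝ᵥ (sandw A X t).mulVec x
      = ((exp (t • A)).mulVec x) ⬝ᵥ X.mulVec ((exp (t • A)).mulVec x) := by
  simp only [sandw]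
  rw [show exp (t • Aᵀ) = (exp (t • A))ᵀ by
    rw [← Matrix.transpose_smul, Matrix.exp_transpose]]
  rw [← Matrix.mulVec_mulVec, ← Matrix.mulVec_mulVec, Matrix.dotProduct_mulVec,
    Matrix.vecMul_transpose]


end LyapunovAux

open LyapunovAux MeasureTheory Filter

open Matrix NormedSpace in
/-- If `A` is Hurwitz, then for every symmetric positive semidefinite `Q` the Lyapunov
equation `AᵀP + PA + Q = 0` has a unique solution `P`, given by
`P = ∫₀^∞ exp(Aᵀt) Q exp(At) dt`; moreover `P` is symmetric positive semidefinite, and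
positive definite whenever `Q` is. -/
theorem lyapunov_equation_solution {n : ℕ} (A : Matrix (Fin n) (Fin n) ℝ)
    (hA : ∀ μ ∈ spectrum ℂ (A.map (Complex.ofReal : ℝ → ℂ)), μ.re < 0)
    (Q : Matrix (Fin n) (Fin n) ℝ) (hQ : Q.PosSemidef) :
    let P : Matrix (Fin n) (Fin n) ℝ := fun i j =>
      ∫ t in Set.Ioi (0 : ℝ), ((exp (t • Aᵀ)) * Q * (exp (t • A))) i j
    (∃! P' : Matrix (Fin n) (Fin n) ℝ, Aᵀ * P' + P' * A + Q = 0) ∧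
      (Aᵀ * P + P * A + Q = 0) ∧ P.PosSemidef ∧ (Q.PosDef → P.PosDef) := by
  intro P
  classical
  have hint : ∀ (X : Matrix (Fin n) (Fin n) ℝ) (i j : Fin n),
      IntegrableOn (fun t => sandw A X t i j) (Set.Ioi (0:ℝ)) :=
    fun X i j => sandw_integrableOn A hA X i j
  have hPdef : P = Matrix.of (fun i j => ∫ t in Set.Ioi (0:ℝ), sandw A Q t i j) := rfl
  -- the Lyapunov equation holds
  have heq : Aᵀ * P + P * A + Q = 0 := by
    ext i j
    have hL : (Aᵀ * P) i j = ∫ t in Set.Ioi (0:ℝ), (Aᵀ * sandw A Q t) i j := by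
      rw [hPdef]; exact left_mul_integral Aᵀ _ (hint Q) i j
    have hR : (P * A) i j = ∫ t in Set.Ioi (0:ℝ), (sandw A Q t * A) i j := by
      rw [hPdef]; exact right_mul_integral A _ (hint Q) i j
    have hLi : IntegrableOn (fun t => (Aᵀ * sandw A Q t) i j) (Set.Ioi (0:ℝ)) := by
      simp only [Matrix.mul_apply]
      exact integrable_finset_sum _ fun k _ => (hint Q k j).const_mul _
    have hRi : IntegrableOn (fun t => (sandw A Q t * A) i j) (Set.Ioi (0:ℝ)) := by
      simp only [Matrix.mul_apply]
      exact integrable_finset_sum _ fun k _ => (hint Q i k).mul_const _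
    have hfun : (fun t => (Aᵀ * sandw A Q t) i j + (sandw A Q t * A) i j)
        = fun t => sandw A (Aᵀ * Q + Q * A) t i j :=
      funext fun t => by rw [← Matrix.add_apply, sandw_deriv_eq]
    have : (Aᵀ * P + P * A + Q) i j
        = (∫ t in Set.Ioi (0:ℝ), (Aᵀ * sandw A Q t) i j)
          + (∫ t in Set.Ioi (0:ℝ), (sandw A Q t * A) i j) + Q i j := by
      simp only [Matrix.add_apply, hL, hR]
    rw [this, ← MeasureTheory.integral_add hLi hRi]
    rw [show (fun t => (Aᵀ * sandw A Q t) i j + (sandw A Q t * A) i j)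
        = fun t => sandw A (Aᵀ * Q + Q * A) t i j from hfun]
    rw [sandw_integral_deriv A hA Q i j]
    simp
  -- symmetry of P
  have hQsymm : Qᵀ = Q := by exact (by simpa using hQ.1 : Q.IsSymm)
  have hPsymm : P.IsHermitian := by
    show Pᴴ = P
    ext i j
    have h1 : Pᴴ i j = P j i := by
      simp [Matrix.conjTranspose_apply]
    rw [h1, hPdef]
    show (∫ t in Set.Ioi (0:ℝ), sandw A Q t j i) = ∫ t in Set.Ioi (0:ℝ), sandw A Q t i j
    have : ∀ t : ℝ, sandw A Q t j i = sandw A Q t i j := fun t => by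
      conv_lhs => rw [show sandw A Q t j i = (sandw A Q t)ᵀ i j from rfl, sandw_transpose,
        hQsymm]
    simp_rw [this]
  -- positive semidefiniteness
  have hPSD : P.PosSemidef := by
    refine Matrix.posSemidef_iff_dotProduct_mulVec.mpr ⟨hPsymm, fun x => ?_⟩
    have hsx : star x = x := by simp
    rw [hsx, hPdef, dot_integral _ (hint Q) x]
    refine MeasureTheory.setIntegral_nonneg measurableSet_Ioi fun t _ => ?_
    rw [sandw_quadratic]
    have := hQ.dotProduct_mulVec_nonneg ((exp (t • A)).mulVec x)
    simpa using this
  -- positive definiteness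
  have hPD : Q.PosDef → P.PosDef := by
    intro hQp
    refine Matrix.posDef_iff_dotProduct_mulVec.mpr ⟨hPsymm, fun x hx => ?_⟩
    have hsx : star x = x := by simp
    rw [hsx, hPdef, dot_integral _ (hint Q) x]
    have hpos : ∀ t : ℝ, 0 < x ⬝ᵥ (sandw A Q t).mulVec x := by
      intro t
      rw [sandw_quadratic]
      have hy : (exp (t • A)).mulVec x ≠ 0 := by
        intro hy0
        have hu : IsUnit (exp (t • A)) := Matrix.isUnit_exp (t • A)
        have hud : IsUnit (exp (t • A)).det := (Matrix.isUnit_iff_isUnit_det _).mp hu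
        have : x = ((exp (t • A))⁻¹ * exp (t • A)).mulVec x := by
          rw [Matrix.nonsing_inv_mul _ hud, Matrix.one_mulVec]
        rw [← Matrix.mulVec_mulVec, hy0, Matrix.mulVec_zero] at this
        exact hx this
      have := hQp.dotProduct_mulVec_pos hy
      simpa using this
    rw [MeasureTheory.setIntegral_pos_iff_support_of_nonneg_ae ?hnn ?hint]
    case hnn =>
      exact Filter.Eventually.of_forall fun t => (hpos t).le
    case hint =>
      exact dot_integrable _ (hint Q) x
    have hsupp : (Function.support fun t => x ⬝ᵥ (sandw A Q t).mulVec x) ∩ Set.Ioi 0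
        = Set.Ioi (0:ℝ) := by
      refine Set.inter_eq_right.mpr fun t _ => (hpos t).ne'
    rw [hsupp, Real.volume_Ioi]
    exact ENNReal.zero_lt_top
  -- uniqueness
  have huniq : ∃! P' : Matrix (Fin n) (Fin n) ℝ, Aᵀ * P' + P' * A + Q = 0 := by
    refine ⟨P, heq, fun P' hP' => ?_⟩
    set D := P' - P with hDdef
    have hD : Aᵀ * D + D * A = 0 := by
      have h1 : Aᵀ * D + D * A
          = (Aᵀ * P' + P' * A + Q) - (Aᵀ * P + P * A + Q) := by
        rw [hDdef]; noncomm_ring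
      rw [h1, hP', heq, sub_zero]
    have hsandw0 : ∀ t : ℝ, sandw A (0 : Matrix (Fin n) (Fin n) ℝ) t = 0 := fun t => by
      simp [sandw]
    have hconst : ∀ i j : Fin n, ∀ t : ℝ, sandw A D t i j = D i j := by
      intro i j t
      have hderiv : ∀ u : ℝ, HasDerivAt (fun v => sandw A D v i j) 0 u := by
        intro u
        have h := sandw_entry_hasDerivAt A D u i j
        rw [sandw_deriv_eq, hD, hsandw0] at h
        simpa using h
      have hdiff : Differentiable ℝ (fun v => sandw A D v i j) :=
        fun u => (hderiv u).differentiableAt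
      have h0 := is_const_of_deriv_eq_zero hdiff (fun u => (hderiv u).deriv) t 0
      rw [h0]
      rw [show sandw A D 0 = D from sandw_zero A D]
    have hzero : D = 0 := by
      ext i j
      have h1 : Tendsto (fun t => sandw A D t i j) atTop (nhds (D i j)) := by
        rw [show (fun t => sandw A D t i j) = fun _ => D i j from
          funext fun t => hconst i j t]
        exact tendsto_const_nhds
      have h2 := sandw_tendsto_entry A hA D i j
      simpa using tendsto_nhds_unique h1 h2
    have := sub_eq_zero.mp hzero
    exact this
  exact ⟨huniq, heq, hPSD, hPD⟩
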